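/- Let A generate a C0-semigroup T on a separable Hilbert space H and let C be a bounded operator from D(A) (with graph norm) to a separable Hilbert space Y. If C is S-admissible for A (i.e., the output map Ψ_T : x ↦ (t ↦ C_Λ T(t)x) extends to a Hilbert–Schmidt operator from H to L²(0,T;Y)) and the semigroup T is exponentially stable, then ∫₀^∞ ‖C_Λ T(t)‖²_{HS} dt < ∞. -/

import Mathlib

open MeasureTheory Filter Set Topology ENNReal

/-- Squared Hilbert–Schmidt norm with respect to a Hilbert basis of `H`. -/
noncomputable def hsNormSq {H X : Type*} [NormedAddCommGroup H] [InnerProductSpace ℝ H]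
    [NormedAddCommGroup X] (e : HilbertBasis ℕ ℝ H) (f : H → X) : ℝ≥0∞ :=
  ∑' k, (‖f (e k)‖₊ : ℝ≥0∞) ^ 2

/-- The Yosida extension `C_Λ x = lim_{μ→∞} C μ R(μ,A) x`, as a total function. -/
noncomputable def yosidaExt {H Y : Type*} [NormedAddCommGroup H] [InnerProductSpace ℝ H]
    [NormedAddCommGroup Y] [NormedSpace ℝ Y]
    (DA : Submodule ℝ H) (C : DA →ₗ[ℝ] Y) (R : ℝ → H →L[ℝ] H) (ω : ℝ)
    (hmem : ∀ μ : ℝ, ω < μ → ∀ x : H, R μ x ∈ DA) : H → Y := fun x =>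
  haveI : Nonempty Y := ⟨0⟩
  limUnder atTop (fun μ : ℝ =>
    if h : ω < μ then C ⟨μ • R μ x, DA.smul_mem μ (hmem μ h x)⟩ else 0)

section Aux

lemma parseval_ofReal {E : Type*} [NormedAddCommGroup E] [InnerProductSpace ℝ E]
    {ι : Type*} (b : HilbertBasis ι ℝ E) (x : E) :
    ∑' i, ENNReal.ofReal ((inner ℝ x (b i) : ℝ)^2) = (‖x‖₊ : ℝ≥0∞)^2 := by
  have h := b.hasSum_inner_mul_inner x x
  have h2 : HasSum (fun i => (inner ℝ x (b i) : ℝ)^2) (‖x‖^2) := by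
    simpa [real_inner_comm (b _) x, real_inner_self_eq_norm_sq, sq] using h
  rw [← ENNReal.ofReal_tsum_of_nonneg (fun i => sq_nonneg _) h2.summable, h2.tsum_eq,
    ENNReal.ofReal_pow (norm_nonneg x), ofReal_norm, enorm_eq_nnnorm]

lemma hs_eq_adjoint_sum {H W : Type*} [NormedAddCommGroup H] [InnerProductSpace ℝ H]
    [CompleteSpace H] [NormedAddCommGroup W] [InnerProductSpace ℝ W] [CompleteSpace W]
    (e : HilbertBasis ℕ ℝ H) {ι : Type*} {K : Submodule ℝ W} (f : HilbertBasis ι ℝ K)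
    (Φ : H →L[ℝ] W) (hK : ∀ x, Φ x ∈ K) :
    ∑' k, (‖Φ (e k)‖₊ : ℝ≥0∞)^2
      = ∑' j, (‖ContinuousLinearMap.adjoint Φ ((f j : K) : W)‖₊ : ℝ≥0∞)^2 := by
  calc ∑' k, (‖Φ (e k)‖₊ : ℝ≥0∞)^2
      = ∑' k, ∑' j, ENNReal.ofReal ((inner ℝ (Φ (e k)) ((f j : K) : W) : ℝ)^2) := by
        refine tsum_congr fun k => ?_
        have h := parseval_ofReal f (⟨Φ (e k), hK _⟩ : K)
        simp only [Submodule.coe_inner] at h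
        have hn : (‖Φ (e k)‖₊ : ℝ≥0∞) = (‖(⟨Φ (e k), hK _⟩ : K)‖₊ : ℝ≥0∞) := rfl
        rw [hn, ← h]
    _ = ∑' j, ∑' k, ENNReal.ofReal ((inner ℝ (Φ (e k)) ((f j : K) : W) : ℝ)^2) :=
        ENNReal.tsum_comm
    _ = ∑' j, (‖ContinuousLinearMap.adjoint Φ ((f j : K) : W)‖₊ : ℝ≥0∞)^2 := by
        refine tsum_congr fun j => ?_
        rw [← parseval_ofReal e (ContinuousLinearMap.adjoint Φ ((f j : K) : W))]
        refine tsum_congr fun k => ?_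
        congr 1
        rw [real_inner_comm (e k) (ContinuousLinearMap.adjoint Φ ((f j : K) : W)),
          ContinuousLinearMap.adjoint_inner_right]

lemma hsNormSq_comp_le {H W : Type*} [NormedAddCommGroup H] [InnerProductSpace ℝ H]
    [CompleteSpace H] [NormedAddCommGroup W] [InnerProductSpace ℝ W] [CompleteSpace W]
    (e : HilbertBasis ℕ ℝ H) (Ψ : H →L[ℝ] W) (B : H →L[ℝ] H) :
    ∑' k, (‖Ψ (B (e k))‖₊ : ℝ≥0∞)^2 ≤ (‖B‖₊ : ℝ≥0∞)^2 * ∑' k, (‖Ψ (e k)‖₊ : ℝ≥0∞)^2 := by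
  set K := (LinearMap.range (Ψ : H →ₗ[ℝ] W)).topologicalClosure with hKdef
  haveI : CompleteSpace K := (Submodule.isClosed_topologicalClosure _).completeSpace_coe
  have hK : ∀ x : H, Ψ x ∈ K := fun x =>
    Submodule.le_topologicalClosure _ (LinearMap.mem_range_self _ x)
  obtain ⟨w, f, -⟩ := exists_hilbertBasis ℝ K
  have h1 := hs_eq_adjoint_sum e f (Ψ.comp B) (fun x => hK (B x))
  have h2 := hs_eq_adjoint_sum e f Ψ hK
  simp only [ContinuousLinearMap.comp_apply] at h1
  rw [h1, h2, ← ENNReal.tsum_mul_left]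
  refine ENNReal.tsum_le_tsum fun j => ?_
  rw [ContinuousLinearMap.adjoint_comp]
  have hb : (‖(ContinuousLinearMap.adjoint B ∘L ContinuousLinearMap.adjoint Ψ)
        ((f j : K) : W)‖₊ : ℝ≥0∞)
      ≤ (‖B‖₊ : ℝ≥0∞) * ‖ContinuousLinearMap.adjoint Ψ ((f j : K) : W)‖₊ := by
    rw [ContinuousLinearMap.comp_apply]
    have h := (ContinuousLinearMap.adjoint B).le_opNNNorm
      (ContinuousLinearMap.adjoint Ψ ((f j : K) : W))
    rw [ContinuousLinearMap.adjoint.nnnorm_map B] at h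
    exact_mod_cast h
  calc (‖(ContinuousLinearMap.adjoint B ∘L ContinuousLinearMap.adjoint Ψ)
        ((f j : K) : W)‖₊ : ℝ≥0∞)^2
      ≤ ((‖B‖₊ : ℝ≥0∞) * ‖ContinuousLinearMap.adjoint Ψ ((f j : K) : W)‖₊)^2 := by gcongr
    _ = (‖B‖₊ : ℝ≥0∞)^2 * (‖ContinuousLinearMap.adjoint Ψ ((f j : K) : W)‖₊ : ℝ≥0∞)^2 :=
        mul_pow _ _ 2

end Aux

/-- Let `A` generate a C0-semigroup `T` on a separable Hilbert space `H` and
let `C ∈ L(D(A),Y)`.  If `C` is `S`-admissible for `A` (the output map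
`Ψ_T : x ↦ (t ↦ C_Λ T(t)x)` extends to a Hilbert–Schmidt operator `H → L²(0,T;Y)`) and `T` is
exponentially stable, then `∫₀^∞ ‖C_Λ T(t)‖²_HS dt < ∞`. -/
theorem lintegral_hsNormSq_yosida_lt_top_of_S_admissible_of_expStable
    {H Y : Type*} [NormedAddCommGroup H] [InnerProductSpace ℝ H] [CompleteSpace H]
    [NormedAddCommGroup Y] [InnerProductSpace ℝ Y] [CompleteSpace Y]
    (e : HilbertBasis ℕ ℝ H)
    (T : ℝ → H →L[ℝ] H)
    (hT0 : T 0 = 1)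
    (hTsg : ∀ s t : ℝ, 0 ≤ s → 0 ≤ t → T (s + t) = (T s).comp (T t))
    (hTcont : ∀ x : H, ContinuousOn (fun t => T t x) (Ici (0:ℝ)))
    (DA : Submodule ℝ H) (Agen : DA →ₗ[ℝ] H)
    (hgen : ∀ x : DA, Tendsto (fun t : ℝ => t⁻¹ • (T t x - (x : H))) (𝓝[>] 0) (𝓝 (Agen x)))
    (C : DA →ₗ[ℝ] Y)
    (hCbd : ∃ c : ℝ, ∀ x : DA, ‖C x‖ ≤ c * (‖(x : H)‖ + ‖Agen x‖))
    (ω : ℝ) (R : ℝ → H →L[ℝ] H)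
    (hmem : ∀ μ : ℝ, ω < μ → ∀ x : H, R μ x ∈ DA)
    (hres : ∀ (μ : ℝ) (hμ : ω < μ) (x : H), μ • R μ x - Agen ⟨R μ x, hmem μ hμ x⟩ = x)
    (hres2 : ∀ μ : ℝ, ω < μ → ∀ x : DA, R μ (μ • (x : H) - Agen x) = (x : H))
    -- `S`-admissibility of `C` for `A`:
    (hSadm : ∃ T0 : ℝ, 0 < T0 ∧ ∃ Ψ : H →L[ℝ] Lp Y 2 (volume.restrict (Ioc (0:ℝ) T0)),
        hsNormSq e ⇑Ψ < ⊤ ∧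
        ∀ x : H, ∀ᵐ t ∂(volume.restrict (Ioc (0:ℝ) T0)),
          (Ψ x : ℝ →ₘ[volume.restrict (Ioc (0:ℝ) T0)] Y) t = yosidaExt DA C R ω hmem (T t x))
    -- exponential stability of `T`:
    (hstab : ∃ M ε : ℝ, 1 ≤ M ∧ 0 < ε ∧ ∀ t : ℝ, 0 ≤ t → ‖T t‖ ≤ M * Real.exp (-ε * t)) :
    (∫⁻ t in Ioi (0:ℝ), hsNormSq e (fun x => yosidaExt DA C R ω hmem (T t x))) < ⊤ := by
  classical
  obtain ⟨T0, hT0pos, Ψ, hΨHS, hΨeq⟩ := hSadm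
  obtain ⟨M, ε, hM, hε, hTb⟩ := hstab
  -- Lemma A: per-vector identity between the lintegral and the Lp norm
  have lemA : ∀ x : H, (∫⁻ t, (‖yosidaExt DA C R ω hmem (T t x)‖₊ : ℝ≥0∞)^2
      ∂(volume.restrict (Ioc (0:ℝ) T0))) = (‖Ψ x‖₊ : ℝ≥0∞)^2 := by
    intro x
    have h1 : (fun t => (‖yosidaExt DA C R ω hmem (T t x)‖₊ : ℝ≥0∞)^2)
        =ᵐ[volume.restrict (Ioc (0:ℝ) T0)]
        fun t => (‖(Ψ x : ℝ →ₘ[volume.restrict (Ioc (0:ℝ) T0)] Y) t‖₊ : ℝ≥0∞)^2 := by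
      filter_upwards [hΨeq x] with t ht
      rw [← ht]
    rw [lintegral_congr_ae h1]
    have h3 : (‖Ψ x‖₊ : ℝ≥0∞) = eLpNorm (⇑(Ψ x)) 2 (volume.restrict (Ioc (0:ℝ) T0)) := by
      rw [Lp.nnnorm_def, ENNReal.coe_toNNReal (Lp.eLpNorm_ne_top _)]
    rw [h3, eLpNorm_eq_lintegral_rpow_enorm_toReal two_ne_zero ENNReal.ofNat_ne_top]
    rw [← ENNReal.rpow_natCast _ 2, ← ENNReal.rpow_mul]
    norm_num
    simp only [enorm_eq_nnnorm]
  have measA : ∀ x : H, AEMeasurable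
      (fun t => (‖yosidaExt DA C R ω hmem (T t x)‖₊ : ℝ≥0∞)^2)
      (volume.restrict (Ioc (0:ℝ) T0)) := by
    intro x
    have h := (Lp.aestronglyMeasurable (Ψ x)).congr (hΨeq x)
    exact h.enorm.pow_const 2
  -- covering of (0, ∞) by the translated intervals
  have hcover : Ioi (0:ℝ) = ⋃ n : ℕ, Ioc ((n:ℝ)*T0) ((n:ℝ)*T0 + T0) := by
    ext x
    simp only [mem_Ioi, mem_iUnion, mem_Ioc]
    constructor
    · intro hx
      have hq : 0 < x / T0 := div_pos hx hT0pos
      have hnpos : 0 < ⌈x / T0⌉₊ := Nat.ceil_pos.mpr hq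
      have hcast : ((⌈x / T0⌉₊ - 1 : ℕ) : ℝ) = (⌈x / T0⌉₊ : ℝ) - 1 := by
        rw [Nat.cast_sub hnpos]; simp
      refine ⟨⌈x / T0⌉₊ - 1, ?_, ?_⟩
      · have hlt : (⌈x / T0⌉₊ : ℝ) - 1 < x / T0 := by
          have := Nat.ceil_lt_add_one (le_of_lt hq)
          linarith
        rw [hcast]
        calc ((⌈x / T0⌉₊ : ℝ) - 1) * T0 < (x / T0) * T0 :=
              mul_lt_mul_of_pos_right hlt hT0pos
          _ = x := div_mul_cancel₀ x (ne_of_gt hT0pos)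
      · have hle : x / T0 ≤ (⌈x / T0⌉₊ : ℝ) := Nat.le_ceil _
        have hx2 : x ≤ (⌈x / T0⌉₊ : ℝ) * T0 := by
          calc x = (x / T0) * T0 := (div_mul_cancel₀ x (ne_of_gt hT0pos)).symm
            _ ≤ (⌈x / T0⌉₊ : ℝ) * T0 := mul_le_mul_of_nonneg_right hle (le_of_lt hT0pos)
        rw [hcast]
        nlinarith
    · rintro ⟨n, hn1, -⟩
      have : (0:ℝ) ≤ (n:ℝ) * T0 := by positivity
      linarith
  have hdisj : Pairwise (Function.onFun Disjoint fun n : ℕ => Ioc ((n:ℝ)*T0) ((n:ℝ)*T0 + T0)) := by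
    have key : ∀ m n : ℕ, m < n →
        Disjoint (Ioc ((m:ℝ)*T0) ((m:ℝ)*T0 + T0)) (Ioc ((n:ℝ)*T0) ((n:ℝ)*T0 + T0)) := by
      intro m n hmn
      rw [Set.Ioc_disjoint_Ioc]
      have h1 : (m:ℝ) + 1 ≤ (n:ℝ) := by exact_mod_cast Nat.succ_le_of_lt hmn
      have h2 : (m:ℝ)*T0 + T0 ≤ (n:ℝ)*T0 := by nlinarith
      exact le_trans (min_le_left _ _) (le_trans h2 (le_max_right _ _))
    intro m n hmn
    rcases hmn.lt_or_gt with h | h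
    · exact key m n h
    · exact (key n m h).symm
  rw [hcover, lintegral_iUnion (fun n => measurableSet_Ioc) hdisj]
  -- the integral over each piece
  have piece : ∀ n : ℕ,
      (∫⁻ t in Ioc ((n:ℝ)*T0) ((n:ℝ)*T0 + T0),
        hsNormSq e (fun x => yosidaExt DA C R ω hmem (T t x)))
      = ∑' k, (‖Ψ (T ((n:ℝ)*T0) (e k))‖₊ : ℝ≥0∞)^2 := by
    intro n
    have hn0 : (0:ℝ) ≤ (n:ℝ) * T0 := by positivity
    have himg : (fun s : ℝ => s + (n:ℝ)*T0) '' Ioc (0:ℝ) T0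
        = Ioc ((n:ℝ)*T0) ((n:ℝ)*T0 + T0) := by
      rw [Set.image_add_const_Ioc]
      simp [add_comm]
    have hmp : MeasurePreserving (fun s : ℝ => s + (n:ℝ)*T0) volume volume :=
      measurePreserving_add_right volume _
    have hemb : MeasurableEmbedding (fun s : ℝ => s + (n:ℝ)*T0) :=
      (MeasurableEquiv.addRight ((n:ℝ)*T0)).measurableEmbedding
    rw [← himg, ← hmp.setLIntegral_comp_emb hemb _ (Ioc (0:ℝ) T0)]
    have hcong : ∫⁻ s in Ioc (0:ℝ) T0,
          hsNormSq e (fun x => yosidaExt DA C R ω hmem (T (s + (n:ℝ)*T0) x))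
        = ∫⁻ s in Ioc (0:ℝ) T0,
          ∑' k, (‖yosidaExt DA C R ω hmem (T s (T ((n:ℝ)*T0) (e k)))‖₊ : ℝ≥0∞)^2 := by
      refine setLIntegral_congr_fun measurableSet_Ioc (fun s hs => ?_)
      have hsg := hTsg s ((n:ℝ)*T0) (le_of_lt hs.1) hn0
      simp only [hsNormSq, hsg, ContinuousLinearMap.comp_apply]
    rw [hcong]
    rw [lintegral_tsum (fun k => measA (T ((n:ℝ)*T0) (e k)))]
    exact tsum_congr fun k => lemA (T ((n:ℝ)*T0) (e k))
  calc ∑' n : ℕ, (∫⁻ t in Ioc ((n:ℝ)*T0) ((n:ℝ)*T0 + T0),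
        hsNormSq e (fun x => yosidaExt DA C R ω hmem (T t x)))
      = ∑' n : ℕ, ∑' k, (‖Ψ (T ((n:ℝ)*T0) (e k))‖₊ : ℝ≥0∞)^2 := tsum_congr piece
    _ ≤ ∑' n : ℕ, (‖T ((n:ℝ)*T0)‖₊ : ℝ≥0∞)^2 * hsNormSq e ⇑Ψ :=
        ENNReal.tsum_le_tsum fun n => hsNormSq_comp_le e Ψ (T ((n:ℝ)*T0))
    _ = (∑' n : ℕ, (‖T ((n:ℝ)*T0)‖₊ : ℝ≥0∞)^2) * hsNormSq e ⇑Ψ := ENNReal.tsum_mul_right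
    _ < ⊤ := by
        refine ENNReal.mul_lt_top ?_ hΨHS
        set r := Real.exp (-(ε * T0)) with hr
        have hr0 : 0 < r := Real.exp_pos _
        have hr1 : r < 1 := Real.exp_lt_one_iff.mpr (by nlinarith)
        have hbound : ∀ n : ℕ, (‖T ((n:ℝ)*T0)‖₊ : ℝ≥0∞)^2
            ≤ ENNReal.ofReal (M^2 * (r^2)^n) := by
          intro n
          have h1 : ‖T ((n:ℝ)*T0)‖ ≤ M * r^n := by
            have h := hTb ((n:ℝ)*T0) (by positivity)
            have harg : -ε * ((n:ℝ)*T0) = (n:ℝ) * (-(ε * T0)) := by ring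
            rw [harg, Real.exp_nat_mul] at h
            exact h
          calc (‖T ((n:ℝ)*T0)‖₊ : ℝ≥0∞)^2 = ENNReal.ofReal (‖T ((n:ℝ)*T0)‖^2) := by
                rw [ENNReal.ofReal_pow (norm_nonneg _), ofReal_norm, enorm_eq_nnnorm]
            _ ≤ ENNReal.ofReal (M^2 * (r^2)^n) := by
                refine ENNReal.ofReal_le_ofReal ?_
                have hrn : (0:ℝ) ≤ r^n := by positivity
                have hms : (M * r^n)^2 = M^2 * (r^2)^n := by
                  rw [mul_pow, ← pow_mul, ← pow_mul, Nat.mul_comm]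
                nlinarith [norm_nonneg (T ((n:ℝ)*T0))]
        have hsummable : Summable (fun n : ℕ => M^2 * (r^2)^n) :=
          (summable_geometric_of_lt_one (by positivity) (by nlinarith)).mul_left _
        calc ∑' n : ℕ, (‖T ((n:ℝ)*T0)‖₊ : ℝ≥0∞)^2
            ≤ ∑' n : ℕ, ENNReal.ofReal (M^2 * (r^2)^n) := ENNReal.tsum_le_tsum hbound
          _ = ENNReal.ofReal (∑' n : ℕ, M^2 * (r^2)^n) :=
              (ENNReal.ofReal_tsum_of_nonneg (fun n => by positivity) hsummable).symm
          _ < ⊤ := ENNReal.ofReal_lt_top
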